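/- Consider a sequence of nonnegative reals r_m (representing ‖g_{k+m}‖) satisfying r_0 ≤ 1/(2M²L) and the recursion M²L·r_{m+1} ≤ (M²L·r_m)² + M²L·B for all m ≥ 0, where B ≥ 0 and δ ∈ (0,1/2) satisfy B + M²LB² ≤ δ/(4M²L). Then for all m ≥ 1: r_m ≤ 1/(2^{2^m} M²L) + B + (δ/(M²L))·(2^{2^m - 1} - 1)/2^{2^m}. -/

import Mathlib

set_option maxHeartbeats 1000000


/-- quadratic convergence rate, Proposition 2: if r_0 ≤ 1/(2M²L),
M²L r_{m+1} ≤ (M²L r_m)² + M²L B, and B + M²LB² ≤ δ/(4M²L) with δ ∈ (0,1/2), then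
r_m ≤ 1/(2^{2^m} M²L) + B + (δ/(M²L))(2^{2^m-1} - 1)/2^{2^m} for all m ≥ 1. -/
theorem stmt_7 (M L B δ : ℝ) (r : ℕ → ℝ)
    (hM : 0 < M) (hL : 0 < L) (hB : 0 ≤ B) (hδ0 : 0 < δ) (hδ : δ < 1 / 2)
    (hr_nonneg : ∀ m, 0 ≤ r m)
    (hr0 : r 0 ≤ 1 / (2 * M ^ 2 * L))
    (hrec : ∀ m, M ^ 2 * L * r (m + 1) ≤ (M ^ 2 * L * r m) ^ 2 + M ^ 2 * L * B)
    (hBδ : B + M ^ 2 * L * B ^ 2 ≤ δ / (4 * M ^ 2 * L)) :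
    ∀ m ≥ 1, r m ≤ 1 / (2 ^ 2 ^ m * M ^ 2 * L) + B
      + (δ / (M ^ 2 * L)) * ((2 ^ (2 ^ m - 1) - 1) / 2 ^ 2 ^ m) := by
  have hc0 : 0 < M ^ 2 * L := by positivity
  set c := M ^ 2 * L with hc
  have ht : c * B + (c * B) ^ 2 ≤ δ / 4 := by
    have h1 : c * (B + c * B ^ 2) ≤ c * (δ / (4 * M ^ 2 * L)) :=
      mul_le_mul_of_nonneg_left hBδ hc0.le
    have h2 : c * (δ / (4 * M ^ 2 * L)) = δ / 4 := by
      rw [hc]; field_simp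
    nlinarith
  have htB : c * B ≤ δ / 4 := by nlinarith [sq_nonneg (c * B)]
  have hcB0 : 0 ≤ c * B := mul_nonneg hc0.le hB
  have h1δ : (0:ℝ) ≤ 1 - δ := by linarith
  clear_value c
  have key : ∀ m, 1 ≤ m → c * r m ≤ (1 / 2 ^ 2 ^ m) * (1 - δ) + c * B + δ / 2 := by
    intro m hm
    induction m, hm using Nat.le_induction with
    | base =>
      have h1 := hrec 0
      have hs0 : c * r 0 ≤ 1 / 2 := by
        have := mul_le_mul_of_nonneg_left hr0 hc0.le
        have heq : c * (1 / (2 * M ^ 2 * L)) = 1 / 2 := by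
          rw [hc]; field_simp
        linarith
      have hs0' : 0 ≤ c * r 0 := mul_nonneg hc0.le (hr_nonneg 0)
      have h4 : (2:ℝ) ^ 2 ^ 1 = 4 := by norm_num
      rw [h4]
      nlinarith
    | succ m hm ih =>
      have hrecm := hrec m
      have ha0 : (0:ℝ) < 1 / 2 ^ 2 ^ m := by positivity
      set a : ℝ := 1 / 2 ^ 2 ^ m with ha
      have ham : a ≤ 1 / 4 := by
        rw [ha]
        have h2m : (2:ℕ) ≤ 2 ^ m := by
          calc 2 = 2 ^ 1 := rfl
            _ ≤ 2 ^ m := Nat.pow_le_pow_right (by norm_num) hm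
        have h4 : (4:ℝ) ≤ 2 ^ 2 ^ m := by
          calc (4:ℝ) = 2 ^ 2 := by norm_num
            _ ≤ 2 ^ 2 ^ m := pow_le_pow_right₀ (by norm_num) h2m
        rw [div_le_div_iff₀ (by positivity) (by norm_num)]
        linarith
      have hsucc : (1:ℝ) / 2 ^ 2 ^ (m + 1) = a ^ 2 := by
        rw [ha, pow_succ 2 m, pow_mul, div_pow, one_pow]
      rw [hsucc]
      have ha0' : 0 ≤ a := ha0.le
      clear_value a
      have hcr0 : 0 ≤ c * r m := mul_nonneg hc0.le (hr_nonneg m)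
      have hxt0 : 0 ≤ a * (1 - δ) + c * B + δ / 2 := by positivity
      have hs2 : (c * r m) ^ 2 ≤ (a * (1 - δ) + c * B + δ / 2) ^ 2 :=
        pow_le_pow_left₀ hcr0 ih 2
      have h12x : (0:ℝ) ≤ 1 - 2 * (a * (1 - δ) + δ / 2) := by nlinarith
      have hA : (a * (1 - δ) + δ / 2) ^ 2 ≤ a ^ 2 * (1 - δ) + δ / 4 := by
        nlinarith [mul_nonneg (mul_nonneg hδ0.le h1δ) (sq_nonneg (1 - 2 * a))]
      have hBpart : 2 * (a * (1 - δ) + δ / 2) * (c * B) + (c * B) ^ 2 ≤ δ / 4 := by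
        nlinarith [mul_nonneg hcB0 h12x]
      have hexp : (a * (1 - δ) + c * B + δ / 2) ^ 2
          = (a * (1 - δ) + δ / 2) ^ 2 + 2 * (a * (1 - δ) + δ / 2) * (c * B) + (c * B) ^ 2 := by
        ring
      linarith [hrecm]
  intro m hm
  have hk := key m hm
  have hpos : (0:ℝ) < 2 ^ 2 ^ m := by positivity
  have hpow : ((2:ℝ) ^ (2 ^ m - 1) - 1) / 2 ^ 2 ^ m = 1 / 2 - 1 / 2 ^ 2 ^ m := by
    have h2m : 2 ^ m - 1 + 1 = 2 ^ m := Nat.succ_pred_eq_of_pos (Nat.pow_pos (by norm_num))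
    have he : (2:ℝ) ^ 2 ^ m = 2 ^ (2 ^ m - 1) * 2 := by
      rw [← pow_succ, h2m]
    rw [he]
    have hp : (0:ℝ) < 2 ^ (2 ^ m - 1) := by positivity
    field_simp
  rw [hpow]
  rw [← mul_le_mul_iff_right₀ hc0]
  calc c * r m ≤ (1 / 2 ^ 2 ^ m) * (1 - δ) + c * B + δ / 2 := hk
    _ = c * (1 / (2 ^ 2 ^ m * M ^ 2 * L) + B + δ / c * (1 / 2 - 1 / 2 ^ 2 ^ m)) := by
        rw [hc]; field_simp; ring
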